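/- arXiv:2206.05767 — 4 statements merged into one kernel-verified Lean document; each statement's English description precedes it below -/
import Mathlib

section
/- Let R be a commutative ring, M a Lucas R-module, and N a pure submodule of M. Then N is a Lucas module. -/
open CategoryTheory

universe u

/-- An ideal is dense if its annihilator in `R` is zero. -/
def Ideal.IsDense {R : Type u} [CommRing R] (I : Ideal R) : Prop :=
  ∀ r : R, (∀ a ∈ I, a * r = 0) → r = 0

/-- An ideal is semi-regular if it contains a finitely generated dense subideal. -/
def Ideal.IsSemiRegular {R : Type u} [CommRing R] (I : Ideal R) : Prop :=
  ∃ J : Ideal R, J ≤ I ∧ J.FG ∧ J.IsDense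

/-- Membership in `𝒬`: finitely generated semi-regular ideals. -/
def Ideal.IsInQ {R : Type u} [CommRing R] (I : Ideal R) : Prop :=
  I.FG ∧ I.IsSemiRegular

/-- An `R`-module is `𝒬`-torsion if every element is annihilated by some `I ∈ 𝒬`. -/
def IsQTorsion (R : Type u) [CommRing R] (M : Type u) [AddCommGroup M] [Module R M] : Prop :=
  ∀ x : M, ∃ I : Ideal R, I.IsInQ ∧ ∀ a ∈ I, a • x = 0

/-- An `R`-module is `𝒬`-torsion-free if no nonzero element is annihilated by any `I ∈ 𝒬`. -/
def IsQTorsionFree (R : Type u) [CommRing R] (M : Type u) [AddCommGroup M] [Module R M] : Prop :=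
  ∀ x : M, (∃ I : Ideal R, I.IsInQ ∧ ∀ a ∈ I, a • x = 0) → x = 0

/-- `Ext¹_R(A, B) = 0`. -/
def Ext1Vanishes (R : Type u) [CommRing R] (A B : Type u) [AddCommGroup A] [Module R A]
    [AddCommGroup B] [Module R B] : Prop :=
  Subsingleton (((Ext R (ModuleCat.{u} R) 1).obj (Opposite.op (ModuleCat.of R A))).obj
    (ModuleCat.of R B))

/-- A Lucas module is a `𝒬`-torsion-free module `M` with `Ext¹_R(R/I, M) = 0` for all `I ∈ 𝒬`. -/
def IsLucasModule (R : Type u) [CommRing R] (M : Type u) [AddCommGroup M] [Module R M] : Prop :=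
  IsQTorsionFree R M ∧ ∀ I : Ideal R, I.IsInQ → Ext1Vanishes R (R ⧸ I) M

/-- A submodule `N` of `M` is pure if for every `R`-module `L`, the natural map
`N ⊗ L → M ⊗ L` is injective. -/
def Submodule.IsPureSubmodule {R : Type u} [CommRing R] {M : Type u} [AddCommGroup M]
    [Module R M] (N : Submodule R M) : Prop :=
  ∀ (L : Type u) [AddCommGroup L] [Module R L],
    Function.Injective (LinearMap.rTensor L N.subtype)

open TensorProduct LinearMap in
lemma pure_mem_of_smul_mem {R M : Type u} [CommRing R] [AddCommGroup M] [Module R M]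
    (hMtf : IsQTorsionFree R M) {N : Submodule R M} (hN : N.IsPureSubmodule)
    {I : Ideal R} (hI : I.IsInQ) {y : M} (hy : ∀ a ∈ I, a • y ∈ N) : y ∈ N := by
  obtain ⟨n, v, hv⟩ := Submodule.fg_iff_exists_fin_generating_family.mp hI.1
  have hvI : ∀ i, v i ∈ I := fun i => hv ▸ Submodule.subset_span ⟨i, rfl⟩
  set f : R →ₗ[R] (Fin n → R) := LinearMap.pi (fun i => v i • LinearMap.id) with hf
  set L := (Fin n → R) ⧸ LinearMap.range f with hL
  set s : ↥N ⊗[R] (Fin n → R) :=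
    ∑ i, (⟨v i • y, hy _ (hvI i)⟩ : N) ⊗ₜ[R] Pi.single i 1 with hs
  have key : lTensor (↥N) (LinearMap.range f).mkQ s = 0 := by
    apply hN L
    rw [map_zero]
    have h1 : rTensor L N.subtype (lTensor (↥N) (LinearMap.range f).mkQ s)
        = lTensor M (LinearMap.range f).mkQ (rTensor (Fin n → R) N.subtype s) := by
      rw [← LinearMap.comp_apply, ← LinearMap.comp_apply, rTensor_comp_lTensor,
        lTensor_comp_rTensor]
    rw [h1, hs, map_sum, map_sum]
    have h2 : ∀ i : Fin n,
        lTensor M (LinearMap.range f).mkQ (rTensor (Fin n → R) N.subtype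
          ((⟨v i • y, hy _ (hvI i)⟩ : N) ⊗ₜ[R] Pi.single i 1))
        = y ⊗ₜ[R] ((LinearMap.range f).mkQ (Pi.single i (v i))) := by
      intro i
      rw [rTensor_tmul, lTensor_tmul]
      simp only [Submodule.coe_subtype]
      rw [show ((v i • y) ⊗ₜ[R] ((LinearMap.range f).mkQ (Pi.single i (1:R))) : M ⊗[R] L)
        = y ⊗ₜ[R] (v i • (LinearMap.range f).mkQ (Pi.single i (1:R))) from (TensorProduct.smul_tmul _ _ _)]
      rw [← map_smul]
      have hsingle : v i • (Pi.single i (1:R) : Fin n → R) = Pi.single i (v i) := by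
        funext j
        by_cases h : j = i
        · subst h; simp
        · simp [Pi.single_apply, h]
      rw [hsingle]
    rw [Finset.sum_congr rfl (fun i _ => h2 i), ← TensorProduct.tmul_sum, ← map_sum]
    have h3 : (∑ i, Pi.single i (v i) : Fin n → R) = v := Finset.univ_sum_single v
    rw [h3]
    have h4 : ((LinearMap.range f).mkQ v : L) = 0 := by
      rw [Submodule.mkQ_apply, Submodule.Quotient.mk_eq_zero]
      exact ⟨1, by ext j; simp [hf]⟩
    rw [h4, TensorProduct.tmul_zero]
  -- s is in the range of lTensor N f
  have hker : s ∈ Set.range (lTensor (↥N) f) :=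
    ((lTensor_exact (↥N) (LinearMap.exact_map_mkQ_range f)
      (Submodule.mkQ_surjective _)) s).mp key
  obtain ⟨u, hu⟩ := hker
  set x : ↥N := TensorProduct.rid R ↥N u with hx
  -- compare components
  have hcomp : ∀ i : Fin n, (⟨v i • y, hy _ (hvI i)⟩ : N) = v i • x := by
    intro i
    have := congrArg ((TensorProduct.rid R ↥N).toLinearMap ∘ₗ lTensor ↥N (LinearMap.proj (R := R) (φ := fun _ : Fin n => R) i)) hu
    rw [LinearMap.comp_apply, LinearMap.comp_apply] at this
    rw [← LinearMap.comp_apply (lTensor ↥N (LinearMap.proj (R := R) (φ := fun _ : Fin n => R) i)) (lTensor ↥N f), ← lTensor_comp] at this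
    have hpf : (LinearMap.proj i ∘ₗ f : R →ₗ[R] R) = v i • LinearMap.id := by
      exact LinearMap.ext_ring (by simp [hf])
    rw [hpf] at this
    have hsm : lTensor ↥N (v i • LinearMap.id) u = v i • lTensor ↥N (LinearMap.id : R →ₗ[R] R) u := by
      rw [LinearMap.lTensor_smul, LinearMap.smul_apply]
    rw [hsm, lTensor_id, LinearMap.id_apply, map_smul] at this
    rw [hs, map_sum, map_sum] at this
    have h5 : ∀ j : Fin n,
        (TensorProduct.rid R ↥N).toLinearMap (lTensor ↥N (LinearMap.proj (R := R) (φ := fun _ : Fin n => R) i)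
          ((⟨v j • y, hy _ (hvI j)⟩ : N) ⊗ₜ[R] Pi.single j 1))
        = ((Pi.single j (1:R) : Fin n → R) i) • (⟨v j • y, hy _ (hvI j)⟩ : N) := by
      intro j; rw [lTensor_tmul]; simp
    rw [Finset.sum_congr rfl (fun j _ => h5 j)] at this
    rw [Finset.sum_eq_single i (fun j _ hj => by simp [Pi.single_apply, hj]) (by simp)] at this
    simpa using this.symm
  have hvy : ∀ i, v i • y = v i • (x : M) := by
    intro i
    have := congrArg (Subtype.val) (hcomp i)
    simpa using this
  have hIy : ∀ a ∈ I, a • (y - (x:M)) = 0 := by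
    intro a ha
    rw [← hv] at ha
    induction ha using Submodule.span_induction with
    | mem z hz => obtain ⟨i, rfl⟩ := hz; rw [smul_sub, hvy i, sub_self]
    | zero => simp
    | add a b _ _ ha hb => rw [add_smul, ha, hb, add_zero]
    | smul r a _ ha => rw [smul_assoc, ha, smul_zero]
  have : y - (x:M) = 0 := hMtf _ ⟨I, hI, hIy⟩
  have : y = (x:M) := by rwa [sub_eq_zero] at this
  rw [this]; exact x.2

lemma ModuleCat.subsingleton_iff_isZero {R : Type u} [Ring R] (X : ModuleCat.{u} R) :
    Subsingleton X ↔ Limits.IsZero X := by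
  constructor
  · intro h; exact ModuleCat.isZero_of_subsingleton X
  · intro h
    refine ⟨fun a b => ?_⟩
    have h1 : (𝟙 X : X ⟶ X) = 0 := h.eq_of_src _ _
    have : ∀ c : X, c = 0 := by
      intro c
      calc c = (𝟙 X : X ⟶ X) c := rfl
        _ = (0 : X ⟶ X) c := by rw [h1]
        _ = 0 := rfl
    rw [this a, this b]

lemma ext1Vanishes_iff_lift {R : Type u} [CommRing R] (A B : Type u) [AddCommGroup A] [Module R A]
    [AddCommGroup B] [Module R B] (P : ProjectiveResolution (ModuleCat.of R A)) :
    Ext1Vanishes R A B ↔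
      ∀ f : P.complex.X 1 ⟶ ModuleCat.of R B, P.complex.d 2 1 ≫ f = 0 →
        ∃ g : P.complex.X 0 ⟶ ModuleCat.of R B, P.complex.d 1 0 ≫ g = f := by
  set K := P.complex.linearYonedaObj R (ModuleCat.of R B) with hK
  have e := P.isoExt (R := R) 1 (ModuleCat.of R B)
  have h1 : Ext1Vanishes R A B ↔ Limits.IsZero (K.homology 1) := by
    rw [Ext1Vanishes, ModuleCat.subsingleton_iff_isZero]
    exact ⟨fun h => h.of_iso e.symm, fun h => h.of_iso e⟩
  rw [h1, ← HomologicalComplex.exactAt_iff_isZero_homology,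
    K.exactAt_iff' 0 1 2 (by simp) (by simp), ShortComplex.moduleCat_exact_iff]
  constructor
  · intro h f hf
    obtain ⟨g, hg⟩ := h f hf
    exact ⟨g, hg⟩
  · intro h f hf
    obtain ⟨g, hg⟩ := h f hf
    exact ⟨g, hg⟩

/-- A pure submodule of a Lucas module is a Lucas module. -/
theorem pure_submodule_lucas (R : Type u) [CommRing R]
    (M : Type u) [AddCommGroup M] [Module R M] (hM : IsLucasModule R M)
    (N : Submodule R M) (hN : N.IsPureSubmodule) :
    IsLucasModule R N := by
  constructor
  · rintro x ⟨I, hI, hx⟩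
    have : (x : M) = 0 := hM.1 _ ⟨I, hI, fun a ha => by
      have := congrArg (Subtype.val) (hx a ha); simpa using this⟩
    exact Subtype.ext this
  · intro I hIQ
    obtain ⟨P⟩ := (inferInstance : HasProjectiveResolution (ModuleCat.of R (R ⧸ I))).out
    rw [ext1Vanishes_iff_lift (R ⧸ I) (↥N) P]
    have hM2 := hM.2 I hIQ
    rw [ext1Vanishes_iff_lift (R ⧸ I) M P] at hM2
    intro f hf
    set ι : ModuleCat.of R ↥N ⟶ ModuleCat.of R M := ModuleCat.ofHom N.subtype with hι
    obtain ⟨g, hg⟩ := hM2 (f ≫ ι) (by rw [← Category.assoc, hf, Limits.zero_comp])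
    have hrk : LinearMap.range (P.complex.d 1 0).hom
        = LinearMap.ker (P.π.f 0).hom :=
      P.exact₀.moduleCat_range_eq_ker
    have hmem : ∀ p : P.complex.X 0, g p ∈ N := by
      intro p
      apply pure_mem_of_smul_mem hM.1 hN hIQ
      intro a ha
      have h0 : (P.π.f 0) (a • p) = 0 := by
        rw [map_smul]
        have key : ∀ q : R ⧸ I, a • q = 0 := by
          intro q
          obtain ⟨r, rfl⟩ := Submodule.Quotient.mk_surjective I q
          rw [← Submodule.Quotient.mk_smul, Submodule.Quotient.mk_eq_zero]
          exact Ideal.mul_mem_right r I ha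
        exact key _
      have h1 : a • p ∈ LinearMap.range (P.complex.d 1 0).hom := by
        rw [hrk]; exact h0
      obtain ⟨q, hq⟩ := h1
      have h2 : a • g p = g (a • p) := (map_smul g.hom a p).symm
      rw [h2, ← hq]
      have h3 : g ((P.complex.d 1 0) q) = (P.complex.d 1 0 ≫ g) q := rfl
      rw [h3, hg]
      exact (f q).2
    refine ⟨ModuleCat.ofHom (LinearMap.codRestrict N g.hom hmem), ?_⟩
    apply ModuleCat.hom_ext
    apply LinearMap.ext
    intro x
    apply Subtype.ext
    show N.subtype ((P.complex.d 1 0 ≫ ModuleCat.ofHom (LinearMap.codRestrict N g.hom hmem)) x) = N.subtype (f x)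
    calc N.subtype ((P.complex.d 1 0 ≫ ModuleCat.ofHom (LinearMap.codRestrict N g.hom hmem)) x)
        = (P.complex.d 1 0 ≫ g) x := rfl
      _ = (f ≫ ι) x := by rw [hg]
      _ = N.subtype (f x) := rfl
end

section
/- Let R be a commutative ring and {M_i, φ_{i,j} | i, j ∈ Γ} an inverse system of Lucas R-modules. Then the inverse limit lim← M_i is a Lucas module. -/
open CategoryTheory

universe u

section AuxLucas
variable {R : Type u} [CommRing R]

noncomputable def KF (A : ModuleCat.{u} R) (K : Submodule R A) : ModuleCat.{u} R :=
  ModuleCat.of R (↥K →₀ R)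

noncomputable def Kd (A : ModuleCat.{u} R) (K : Submodule R A) : KF A K ⟶ A :=
  ModuleCat.ofHom (K.subtype ∘ₗ Finsupp.linearCombination R (id : ↥K → ↥K))

lemma Kd_range (A : ModuleCat.{u} R) (K : Submodule R A) :
    LinearMap.range (Kd A K).hom = K := by
  have h : LinearMap.range (K.subtype ∘ₗ Finsupp.linearCombination R (id : ↥K → ↥K)) = K := by
    rw [LinearMap.range_comp, LinearMap.range_eq_top.2 (Finsupp.linearCombination_id_surjective R ↥K),
      Submodule.map_top, Submodule.range_subtype]
  exact h

lemma Kd_single (A : ModuleCat.{u} R) (K : Submodule R A) (x : ↥K) (r : R) :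
    Kd A K (Finsupp.single x r) = r • (x : A) := by
  have h : (K.subtype ∘ₗ Finsupp.linearCombination R (id : ↥K → ↥K)) (Finsupp.single x r)
      = r • (x : A) := by
    simp [Finsupp.linearCombination_single]
  exact h

noncomputable instance (A : ModuleCat.{u} R) (K : Submodule R A) : Projective (KF A K) :=
  ModuleCat.projective_of_free (Finsupp.basisSingleOne (R := R) (ι := ↥K))

abbrev idealSub (I : Ideal R) : Submodule R (ModuleCat.of R R) := I

noncomputable def seq (I : Ideal R) : ℕ → Σ (A B : ModuleCat.{u} R), A ⟶ B
  | 0 => ⟨KF (ModuleCat.of R R) (idealSub I), ModuleCat.of R R, Kd (ModuleCat.of R R) (idealSub I)⟩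
  | n+1 => ⟨KF (seq I n).1 (LinearMap.ker (seq I n).2.2.hom), (seq I n).1, Kd _ _⟩

noncomputable def rX (I : Ideal R) : ℕ → ModuleCat.{u} R := fun n => (seq I n).2.1

noncomputable def rd (I : Ideal R) (n : ℕ) : rX I (n+1) ⟶ rX I n := (seq I n).2.2

lemma rd_range_succ (I : Ideal R) (n : ℕ) :
    LinearMap.range (rd I (n+1)).hom = LinearMap.ker (rd I n).hom :=
  Kd_range _ _

lemma rd_range_zero (I : Ideal R) : LinearMap.range (rd I 0).hom = idealSub I := Kd_range _ _

lemma rd_comp (I : Ideal R) (n : ℕ) : rd I (n+1) ≫ rd I n = 0 := by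
  apply ModuleCat.hom_ext
  apply LinearMap.ext
  intro x
  have h : rd I (n+1) x ∈ LinearMap.ker (rd I n).hom := by
    rw [← rd_range_succ]; exact LinearMap.mem_range_self _ x
  simpa using h

noncomputable def rcomplex (I : Ideal R) : ChainComplex (ModuleCat.{u} R) ℕ :=
  ChainComplex.of (rX I) (rd I) (rd_comp I)

instance rcomplex_projective (I : Ideal R) (n : ℕ) : Projective ((rcomplex I).X n) := by
  cases n with
  | zero => exact ModuleCat.projective_of_free (Module.Basis.singleton PUnit.{u+1} R)
  | succ n =>
    show Projective (rX I (n+1))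
    cases n with
    | zero => exact inferInstanceAs (Projective (KF _ _))
    | succ m => exact inferInstanceAs (Projective (KF _ _))

lemma rcomplex_exactAt_succ (I : Ideal R) (n : ℕ) : (rcomplex I).ExactAt (n+1) := by
  rw [HomologicalComplex.exactAt_iff' _ (n+2) (n+1) n (by simp) (by simp)]
  rw [ShortComplex.moduleCat_exact_iff]
  intro x hx
  dsimp [HomologicalComplex.sc', rcomplex] at x hx ⊢
  have hd : (rcomplex I).d (n+1) n = rd I n := ChainComplex.of_d (rX I) (rd I) n
  have hk : x ∈ LinearMap.ker (rd I n).hom := by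
    rw [← hd]; exact hx
  rw [← rd_range_succ] at hk
  obtain ⟨y, hy⟩ := hk
  refine ⟨y, ?_⟩
  have h : (ChainComplex.of (rX I) (rd I) (rd_comp I)).d (n + 2) (n + 1) = rd I (n+1) :=
    ChainComplex.of_d (rX I) (rd I) (n+1)
  rw [← h] at hy
  exact hy

noncomputable def rpi (I : Ideal R) : rcomplex I ⟶ (ChainComplex.single₀ (ModuleCat.{u} R)).obj (ModuleCat.of R (R ⧸ I)) :=
  (ChainComplex.toSingle₀Equiv _ _).symm ⟨ModuleCat.ofHom (Submodule.mkQ I), by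
    apply ModuleCat.hom_ext
    apply LinearMap.ext
    intro x
    have h1 : (rcomplex I).d 1 0 = rd I 0 := ChainComplex.of_d (rX I) (rd I) 0
    have h2 : rd I 0 x ∈ idealSub I := by rw [← rd_range_zero]; exact LinearMap.mem_range_self _ x
    show Submodule.mkQ I ((rcomplex I).d 1 0 x) = 0
    rw [h1]
    exact (Submodule.Quotient.mk_eq_zero I).2 h2⟩

lemma rpi_zero (I : Ideal R) : (rpi I).f 0 = ModuleCat.ofHom (Submodule.mkQ I) := by
  exact ChainComplex.toSingle₀Equiv_symm_apply_f_zero _ _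

noncomputable def rres (I : Ideal R) : ProjectiveResolution (ModuleCat.of R (R ⧸ I)) where
  complex := rcomplex I
  π := rpi I
  quasiIso := ⟨fun n => by
    cases n
    · rw [ChainComplex.quasiIsoAt₀_iff, ShortComplex.quasiIso_iff_of_zeros']
      · constructor
        · rw [ShortComplex.moduleCat_exact_iff]
          intro x hx
          have hx' : (rpi I).f 0 x = 0 := hx
          rw [rpi_zero] at hx'
          have hmem : x ∈ idealSub I := (Submodule.Quotient.mk_eq_zero I).1 hx'
          rw [← rd_range_zero] at hmem
          obtain ⟨y, hy⟩ := hmem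
          refine ⟨y, ?_⟩
          have h : (rcomplex I).d 1 0 = rd I 0 := ChainComplex.of_d (rX I) (rd I) 0
          show ((rcomplex I).d 1 0) y = x
          rw [h]
          exact hy
        · show Epi ((rpi I).f 0)
          rw [rpi_zero]
          erw [ModuleCat.epi_iff_surjective]
          exact Submodule.mkQ_surjective I
      all_goals rfl
    · rw [quasiIsoAt_iff_exactAt']
      · apply rcomplex_exactAt_succ
      · apply ChainComplex.exactAt_succ_single_obj⟩

lemma subsingleton_of_isZero {M : ModuleCat.{u} R} (h : Limits.IsZero M) : Subsingleton M := by
  have hid : (𝟙 M : M ⟶ M) = 0 := h.eq_of_src _ _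
  constructor
  intro a b
  have ha : ∀ x : M, x = 0 := by
    intro x
    calc x = (𝟙 M : M ⟶ M) x := rfl
    _ = (0 : M ⟶ M) x := by rw [hid]
    _ = 0 := rfl
  rw [ha a, ha b]

lemma ext1_iff (I : Ideal R) (M : Type u) [AddCommGroup M] [Module R M] :
    Subsingleton (((Ext R (ModuleCat.{u} R) 1).obj
        (Opposite.op (ModuleCat.of R (R ⧸ I)))).obj (ModuleCat.of R M)) ↔
      ∀ g : I →ₗ[R] M, ∃ m : M, ∀ x : I, g x = (x : R) • m := by
  set Y := ModuleCat.of R M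
  have iso := ProjectiveResolution.isoExt (R := R) (rres I) 1 Y
  -- transfer subsingleton across iso
  have hsub : Subsingleton (((Ext R (ModuleCat.{u} R) 1).obj
      (Opposite.op (ModuleCat.of R (R ⧸ I)))).obj Y) ↔
      Subsingleton (((rres I).complex.linearYonedaObj R Y).homology 1) := by
    constructor
    · intro h
      exact Equiv.subsingleton ((forget _).mapIso iso).toEquiv.symm
    · intro h
      exact Equiv.subsingleton ((forget _).mapIso iso).toEquiv
  rw [hsub]
  have hzero : Subsingleton (((rres I).complex.linearYonedaObj R Y).homology 1) ↔
      Limits.IsZero (((rres I).complex.linearYonedaObj R Y).homology 1) := by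
    constructor
    · intro h
      exact ModuleCat.isZero_of_subsingleton _
    · intro h
      exact subsingleton_of_isZero h
  rw [hzero, ← HomologicalComplex.exactAt_iff_isZero_homology,
    HomologicalComplex.exactAt_iff' _ 0 1 2 (by simp) (by simp),
    ShortComplex.moduleCat_exact_iff]
  have hd21 : ((rres I).complex).d 2 1 = rd I 1 := ChainComplex.of_d (rX I) (rd I) 1
  have hd10 : ((rres I).complex).d 1 0 = rd I 0 := ChainComplex.of_d (rX I) (rd I) 0
  have hg' : ∀ x₂ : (((rres I).complex).X 1 ⟶ Y),
      (HomologicalComplex.sc' (((rres I).complex).linearYonedaObj R Y) 0 1 2).g x₂ = rd I 1 ≫ x₂ := by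
    intro x₂
    have e : (((rres I).complex).linearYonedaObj R Y).d 1 2
        = ModuleCat.ofHom (Linear.leftComp R Y (((rres I).complex).d 2 1)) :=
      ChainComplex.linearYonedaObj_d ((rres I).complex) R Y 1 2
    show ((((rres I).complex).linearYonedaObj R Y).d 1 2) x₂ = rd I 1 ≫ x₂
    rw [e]
    show (Linear.leftComp R Y (((rres I).complex).d 2 1)) x₂ = rd I 1 ≫ x₂
    rw [Linear.leftComp_apply, hd21]
    rfl
  have hf' : ∀ x₁ : (((rres I).complex).X 0 ⟶ Y),
      (HomologicalComplex.sc' (((rres I).complex).linearYonedaObj R Y) 0 1 2).f x₁ = rd I 0 ≫ x₁ := by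
    intro x₁
    have e : (((rres I).complex).linearYonedaObj R Y).d 0 1
        = ModuleCat.ofHom (Linear.leftComp R Y (((rres I).complex).d 1 0)) :=
      ChainComplex.linearYonedaObj_d ((rres I).complex) R Y 0 1
    show ((((rres I).complex).linearYonedaObj R Y).d 0 1) x₁ = rd I 0 ≫ x₁
    rw [e]
    show (Linear.leftComp R Y (((rres I).complex).d 1 0)) x₁ = rd I 0 ≫ x₁
    rw [Linear.leftComp_apply, hd10]
    rfl
  have hKds : ∀ (a : ↥I) (b : R),
      rd I 0 (Finsupp.single a b) = b • (a : R) := fun a b =>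
    Kd_single (ModuleCat.of R R) (idealSub I) a b
  constructor
  · -- sc' exactness → ideal statement
    intro hc g'
    set g : ((rres I).complex).X 1 ⟶ Y :=
      ModuleCat.ofHom (g' ∘ₗ Finsupp.linearCombination R (id : ↥I → ↥I)) with hgdef
    have hker : ∀ w : ↑(((rres I).complex).X 1), rd I 0 w = 0 → g w = 0 := by
      intro w hw
      have hlc : Finsupp.linearCombination R (id : ↥I → ↥I) w = 0 := by
        apply Subtype.ext
        exact hw
      show g' (Finsupp.linearCombination R (id : ↥I → ↥I) w) = 0
      rw [hlc, map_zero]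
    have hgz : (HomologicalComplex.sc' (((rres I).complex).linearYonedaObj R Y) 0 1 2).g g
        = 0 := by
      rw [hg']
      apply ModuleCat.hom_ext
      apply LinearMap.ext
      intro z
      have hmem : rd I 0 (rd I 1 z) = 0 := by
        have hm2 : rd I 1 z ∈ LinearMap.ker (rd I 0).hom := by
          rw [← rd_range_succ]; exact LinearMap.mem_range_self _ z
        exact hm2
      show g (rd I 1 z) = 0
      exact hker _ hmem
    obtain ⟨h, hh⟩ := hc g hgz
    set h' : ((rres I).complex).X 0 ⟶ Y := h with hh'def
    have hh2 : (HomologicalComplex.sc' (((rres I).complex).linearYonedaObj R Y) 0 1 2).f h'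
        = g := hh
    rw [hf' h'] at hh2
    refine ⟨h' (1 : R), ?_⟩
    intro x
    have h1 : g (Finsupp.single x (1 : R)) = g' x := by
      show g' (Finsupp.linearCombination R (id : ↥I → ↥I) (Finsupp.single x 1)) = g' x
      rw [Finsupp.linearCombination_single, one_smul]
      rfl
    have h2 : (rd I 0 ≫ h') (Finsupp.single x (1 : R)) = (x : R) • h' (1 : R) := by
      show h' (rd I 0 (Finsupp.single x 1)) = (x : R) • h' (1 : R)
      rw [hKds, one_smul]
      have e1 : (x : R) = (x : R) • (1 : R) := by simp
      conv_lhs => rw [e1]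
      exact map_smul h'.hom _ _
    rw [← h1, ← hh2]
    exact h2
  · -- ideal statement → sc' exactness
    intro hi x₂ hx₂
    set x₂' : ((rres I).complex).X 1 ⟶ Y := x₂ with hx₂'def
    have hx₂2 : (HomologicalComplex.sc' (((rres I).complex).linearYonedaObj R Y) 0 1 2).g x₂'
        = 0 := hx₂
    rw [hg' x₂'] at hx₂2
    have hker : ∀ w : ↑(((rres I).complex).X 1), rd I 0 w = 0 → x₂' w = 0 := by
      intro w hw
      have hmem : w ∈ LinearMap.range (rd I 1).hom := by
        rw [rd_range_succ]; exact hw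
      obtain ⟨z, hz⟩ := hmem
      rw [← hz]
      show (rd I 1 ≫ x₂') z = 0
      rw [hx₂2]
      rfl
    have hadd : ∀ a b : ↥I, x₂' (Finsupp.single (a + b) (1:R))
        = x₂' (Finsupp.single a 1) + x₂' (Finsupp.single b 1) := by
      intro a b
      have hz : x₂' (Finsupp.single (a + b) (1:R)
          - Finsupp.single a 1 - Finsupp.single b 1) = 0 := by
        apply hker
        erw [map_sub, map_sub, hKds, hKds, hKds]
        simp
        exact sub_eq_zero.2 (add_sub_cancel_left _ _)
      erw [map_sub, map_sub, sub_sub, sub_eq_zero] at hz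
      exact hz
    have hsmul : ∀ (r : R) (a : ↥I), x₂' (Finsupp.single (r • a) (1:R))
        = r • x₂' (Finsupp.single a 1) := by
      intro r a
      have hz : x₂' (Finsupp.single (r • a) (1:R) - r • Finsupp.single a 1) = 0 := by
        apply hker
        erw [map_sub, map_smul, hKds, hKds]
        simp
        exact sub_eq_zero.2 rfl
      erw [map_sub, sub_eq_zero, map_smul] at hz
      exact hz
    set g' : ↥I →ₗ[R] M :=
      { toFun := fun x => x₂' (Finsupp.single x (1 : R))
        map_add' := fun a b => hadd a b
        map_smul' := fun r a => hsmul r a } with hg'def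
    obtain ⟨m, hm⟩ := hi g'
    refine ⟨ModuleCat.ofHom (LinearMap.toSpanSingleton R M m), ?_⟩
    refine (hf' _).trans ?_
    have goal : (rd I 0 ≫ ModuleCat.ofHom (LinearMap.toSpanSingleton R M m)) = x₂' := by
      apply ModuleCat.hom_ext
      refine Finsupp.lhom_ext ?_
      intro a b
      show (LinearMap.toSpanSingleton R M m) (rd I 0 (Finsupp.single a b))
        = x₂' (Finsupp.single a b)
      rw [hKds]
      have h3 : x₂' (Finsupp.single a b) = b • x₂' (Finsupp.single a (1:R)) := by
        erw [← map_smul]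
        congr 1
        erw [Finsupp.smul_single, smul_eq_mul, mul_one]
      rw [h3]
      have h4 : x₂' (Finsupp.single a (1:R)) = g' a := rfl
      rw [h4, hm a, map_smul, LinearMap.toSpanSingleton_apply]
    exact goal

end AuxLucas

/-- The inverse limit of an inverse system of Lucas modules (the submodule of
the product consisting of compatible families) is a Lucas module. -/
theorem inverse_limit_lucas (R : Type u) [CommRing R] (Γ : Type u) [Preorder Γ]
    (M : Γ → Type u) [∀ i, AddCommGroup (M i)] [∀ i, Module R (M i)]
    (φ : ∀ i j : Γ, i ≤ j → (M j →ₗ[R] M i))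
    (hid : ∀ i : Γ, φ i i le_rfl = LinearMap.id)
    (hcomp : ∀ (i j k : Γ) (hij : i ≤ j) (hjk : j ≤ k),
      (φ i j hij).comp (φ j k hjk) = φ i k (hij.trans hjk))
    (hLucas : ∀ i, IsLucasModule R (M i))
    (L : Submodule R (∀ i, M i))
    (hL : ∀ f : ∀ i, M i, f ∈ L ↔ ∀ (i j : Γ) (h : i ≤ j), φ i j h (f j) = f i) :
    IsLucasModule R L := by
  constructor
  · -- Q-torsion-free
    intro x hx
    obtain ⟨I, hI, hann⟩ := hx
    apply Subtype.ext
    funext i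
    show (x : ∀ i, M i) i = 0
    refine (hLucas i).1 ((x : ∀ i, M i) i) ⟨I, hI, fun a ha => ?_⟩
    have h1 : a • x = 0 := hann a ha
    have h2 : a • (x : ∀ i, M i) = 0 := congrArg Subtype.val h1
    exact congrFun h2 i
  · intro I hI
    show Subsingleton (((Ext R (ModuleCat.{u} R) 1).obj
      (Opposite.op (ModuleCat.of R (R ⧸ I)))).obj (ModuleCat.of R ↥L))
    rw [ext1_iff I ↥L]
    intro g
    set gi : ∀ i, ↥I →ₗ[R] M i :=
      fun i => (LinearMap.proj i) ∘ₗ (L.subtype) ∘ₗ g with hgi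
    have hext : ∀ i, ∃ m : M i, ∀ x : ↥I, gi i x = (x : R) • m := by
      intro i
      have hv : Subsingleton (((Ext R (ModuleCat.{u} R) 1).obj
          (Opposite.op (ModuleCat.of R (R ⧸ I)))).obj (ModuleCat.of R (M i))) :=
        (hLucas i).2 I hI
      exact (ext1_iff I (M i)).1 hv (gi i)
    choose m hm using hext
    have hcompat : ∀ (i j : Γ) (h : i ≤ j), φ i j h (m j) = m i := by
      intro i j h
      have hz : φ i j h (m j) - m i = 0 := by
        refine (hLucas i).1 _ ⟨I, hI, fun a ha => ?_⟩
        have e1 : a • m j = gi j ⟨a, ha⟩ := (hm j ⟨a, ha⟩).symm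
        have e2 : a • m i = gi i ⟨a, ha⟩ := (hm i ⟨a, ha⟩).symm
        have e3 : gi j ⟨a, ha⟩ = ((g ⟨a, ha⟩ : ↥L) : ∀ k, M k) j := rfl
        have e4 : gi i ⟨a, ha⟩ = ((g ⟨a, ha⟩ : ↥L) : ∀ k, M k) i := rfl
        have e5 : φ i j h (((g ⟨a, ha⟩ : ↥L) : ∀ k, M k) j)
            = ((g ⟨a, ha⟩ : ↥L) : ∀ k, M k) i :=
          (hL _).1 (g ⟨a, ha⟩).2 i j h
        rw [smul_sub, ← map_smul, e1, e2, e3, e4, e5, sub_self]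
      have := sub_eq_zero.1 hz
      exact this
    refine ⟨⟨m, (hL m).2 hcompat⟩, ?_⟩
    intro x
    apply Subtype.ext
    funext i
    show ((g x : ↥L) : ∀ k, M k) i = (x : R) • m i
    exact hm i x
end

section
/- Let R be a commutative ring, M a 𝒬-torsion-free R-module, and L a Lucas R-module containing M as an essential submodule such that L/M is 𝒬-torsion. Then the inclusion map M → L is an ℒ-envelope of M, where ℒ is the class of all Lucas R-modules. -/
open CategoryTheory

universe u

section Splitting

open CategoryTheory Limits

lemma splitting_of_ext1Vanishes {R : Type u} [CommRing R] {A F E : Type u}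
    [AddCommGroup A] [Module R A] [AddCommGroup F] [Module R F] [AddCommGroup E] [Module R E]
    (hext : Ext1Vanishes R A F) (ι : F →ₗ[R] E) (π : E →ₗ[R] A)
    (hι : Function.Injective ι) (hπ : Function.Surjective π)
    (hker : LinearMap.ker π = LinearMap.range ι) :
    ∃ s : A →ₗ[R] E, π.comp s = LinearMap.id := by
  classical
  set AA : ModuleCat.{u} R := ModuleCat.of R A with hAA
  set FF : ModuleCat.{u} R := ModuleCat.of R F with hFF
  set EE : ModuleCat.{u} R := ModuleCat.of R E with hEE
  let P : ProjectiveResolution AA := ProjectiveResolution.of AA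
  set K := P.complex.linearYonedaObj R FF with hK
  have hsub : Subsingleton (K.homology 1) := by
    haveI : Subsingleton (((Ext R (ModuleCat.{u} R) 1).obj (Opposite.op AA)).obj FF) := hext
    exact (P.isoExt 1 FF).toLinearEquiv.toEquiv.symm.subsingleton
  have hz : IsZero (K.homology 1) := by
    haveI := hsub
    exact ModuleCat.isZero_of_subsingleton _
  have hexK : K.ExactAt 1 := (HomologicalComplex.exactAt_iff_isZero_homology K 1).2 hz
  rw [K.exactAt_iff' 0 1 2 (by simp) (by simp)] at hexK
  rw [ShortComplex.moduleCat_exact_iff] at hexK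
  let ε : P.complex.X 0 ⟶ AA := P.π.f 0
  haveI : Epi ε := inferInstanceAs (Epi (P.π.f 0))
  haveI : Epi (ModuleCat.ofHom π : EE ⟶ AA) := (ModuleCat.epi_iff_surjective _).2 hπ
  let g : P.complex.X 0 ⟶ EE := Projective.factorThru ε (ModuleCat.ofHom π)
  let glin : P.complex.X 0 →ₗ[R] E := g.hom
  let dlin : P.complex.X 1 →ₗ[R] P.complex.X 0 := (P.complex.d 1 0).hom
  have hgπ : ∀ x : P.complex.X 0, π (glin x) = ε x := by
    intro x
    have hfc := Projective.factorThru_comp ε (ModuleCat.ofHom π)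
    calc π (glin x) = (g ≫ ModuleCat.ofHom π) x := rfl
    _ = ε x := by rw [hfc]
  have hd10ε : ∀ x : P.complex.X 1, ε (dlin x) = 0 := by
    intro x
    have h0 : P.complex.d 1 0 ≫ ε = 0 := P.complex_d_comp_π_f_zero
    calc ε (dlin x) = (P.complex.d 1 0 ≫ ε) x := rfl
    _ = 0 := by rw [h0]; rfl
  have hmem : ∀ x : P.complex.X 1, glin (dlin x) ∈ LinearMap.range ι := by
    intro x
    rw [← hker]
    exact LinearMap.mem_ker.mpr ((hgπ (dlin x)).trans (hd10ε x))
  let eqv : F ≃ₗ[R] LinearMap.range ι := LinearEquiv.ofInjective ι hι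
  let f'lin : P.complex.X 1 →ₗ[R] F :=
    eqv.symm.toLinearMap ∘ₗ LinearMap.codRestrict (LinearMap.range ι) (glin ∘ₗ dlin) hmem
  have hιf' : ∀ x : P.complex.X 1, ι (f'lin x) = glin (dlin x) := by
    intro x
    have h1 : eqv (f'lin x) = ⟨glin (dlin x), hmem x⟩ := eqv.apply_symm_apply _
    have h2 := congrArg Subtype.val h1
    simpa [eqv, LinearEquiv.ofInjective_apply] using h2
  have hKd : ∀ (i j : ℕ) (ψ : P.complex.X i ⟶ FF), K.d i j ψ = P.complex.d j i ≫ ψ := by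
    intro i j ψ
    rfl
  let f' : P.complex.X 1 ⟶ FF := ModuleCat.ofHom f'lin
  have hg0 : (K.sc' 0 1 2).g f' = 0 := by
    show K.d 1 2 f' = 0
    rw [hKd]
    apply ModuleCat.hom_ext
    apply LinearMap.ext
    intro x
    apply hι
    show ι (f'lin (P.complex.d 2 1 x)) = ι 0
    rw [hιf', map_zero]
    have hdd : P.complex.d 2 1 ≫ P.complex.d 1 0 = 0 := P.complex.d_comp_d 2 1 0
    calc glin (dlin (P.complex.d 2 1 x)) = glin ((P.complex.d 2 1 ≫ P.complex.d 1 0) x) := rfl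
    _ = glin 0 := by rw [hdd]; rfl
    _ = 0 := map_zero _
  obtain ⟨h'0, hh'0⟩ := hexK f' hg0
  let h' : P.complex.X 0 ⟶ FF := h'0
  have hh' : (K.sc' 0 1 2).f h' = f' := hh'0
  have h2 : P.complex.d 1 0 ≫ h' = f' := (hKd 0 1 h').symm.trans hh'
  let h'lin : P.complex.X 0 →ₗ[R] F := h'.hom
  have hcob' : ∀ x : P.complex.X 1, h'lin (dlin x) = f'lin x := by
    intro x
    calc h'lin (dlin x) = (P.complex.d 1 0 ≫ h') x := rfl
    _ = f'lin x := by rw [h2]; rfl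
  let g₂ : P.complex.X 0 →ₗ[R] E := glin - ι ∘ₗ h'lin
  have hg₂d : ∀ y : P.complex.X 1, g₂ (dlin y) = 0 := by
    intro y
    show glin (dlin y) - ι (h'lin (dlin y)) = 0
    rw [hcob', hιf', sub_self]
  have hexact0 := P.exact₀
  rw [ShortComplex.moduleCat_exact_iff] at hexact0
  have hkerε : ∀ x : P.complex.X 0, ε x = 0 → g₂ x = 0 := by
    intro x hx
    obtain ⟨y, hy⟩ := hexact0 x hx
    have hy' : dlin y = x := hy
    rw [← hy']
    exact hg₂d y
  have hεsurj : Function.Surjective (ε.hom : P.complex.X 0 →ₗ[R] A) :=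
    (ModuleCat.epi_iff_surjective ε).1 inferInstance
  let εlin : P.complex.X 0 →ₗ[R] A := ε.hom
  have hle : LinearMap.ker εlin ≤ LinearMap.ker g₂ := fun x hx => hkerε x hx
  let sbar : (P.complex.X 0 ⧸ LinearMap.ker εlin) →ₗ[R] E := (LinearMap.ker εlin).liftQ g₂ hle
  let e : (P.complex.X 0 ⧸ LinearMap.ker εlin) ≃ₗ[R] A := εlin.quotKerEquivOfSurjective hεsurj
  refine ⟨sbar ∘ₗ e.symm.toLinearMap, ?_⟩
  apply LinearMap.ext
  intro a
  obtain ⟨q, hq⟩ : ∃ q, e.symm a = q := ⟨_, rfl⟩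
  obtain ⟨x, rfl⟩ := (LinearMap.ker εlin).mkQ_surjective q
  have hmke : e ((LinearMap.ker εlin).mkQ x) = εlin x := by
    simp [e, LinearMap.quotKerEquivOfSurjective, LinearMap.quotKerEquivRange_apply_mk]
  have ha : εlin x = a := by
    rw [← hmke, ← hq, e.apply_symm_apply]
  show π (sbar (e.symm a)) = a
  rw [hq]
  have hsb : sbar ((LinearMap.ker εlin).mkQ x) = g₂ x := rfl
  rw [hsb]
  show π (glin x - ι (h'lin x)) = a
  have hπι : π (ι (h'lin x)) = 0 := by
    have hm : ι (h'lin x) ∈ LinearMap.ker π := by rw [hker]; exact ⟨h'lin x, rfl⟩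
    exact hm
  rw [map_sub, hπι, sub_zero, hgπ]
  exact ha

end Splitting

section Aux

variable {R : Type u} [CommRing R]

lemma Ideal.IsDense.mul {I J : Ideal R} (hI : I.IsDense) (hJ : J.IsDense) :
    (I * J).IsDense := by
  intro r hr
  apply hI
  intro a ha
  apply hJ
  intro b hb
  have := hr (a * b) (Ideal.mul_mem_mul ha hb)
  calc b * (a * r) = a * b * r := by ring
  _ = 0 := this

lemma Ideal.IsInQ.mul {I J : Ideal R} (hI : I.IsInQ) (hJ : J.IsInQ) : (I * J).IsInQ := by
  obtain ⟨hIfg, I', hI'le, hI'fg, hI'd⟩ := hI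
  obtain ⟨hJfg, J', hJ'le, hJ'fg, hJ'd⟩ := hJ
  exact ⟨Submodule.FG.mul hIfg hJfg,
    ⟨I' * J', Ideal.mul_mono hI'le hJ'le, Submodule.FG.mul hI'fg hJ'fg, hI'd.mul hJ'd⟩⟩

lemma Ideal.top_isInQ : (⊤ : Ideal R).IsInQ := by
  refine ⟨⟨{1}, by simp⟩, ⊤, le_rfl, ⟨{1}, by simp⟩, ?_⟩
  intro r hr
  simpa using hr 1 trivial

lemma IsQTorsionFree.eq {M : Type u} [AddCommGroup M] [Module R M]
    (hM : IsQTorsionFree R M) {x y : M} {I : Ideal R} (hI : I.IsInQ)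
    (h : ∀ a ∈ I, a • x = a • y) : x = y := by
  have := hM (x - y) ⟨I, hI, fun a ha => by rw [smul_sub, h a ha, sub_self]⟩
  exact sub_eq_zero.mp this

/-- Key lemma: a map from an ideal `I ∈ 𝒬` to a module `F` with `Ext¹(R/I, F) = 0`
is given by multiplication by some element of `F`. -/
lemma extend_ideal_map {F : Type u} [AddCommGroup F] [Module R F]
    {I : Ideal R} (hI : I.IsInQ) (hext : Ext1Vanishes R (R ⧸ I) F)
    (φ : I →ₗ[R] F) : ∃ y : F, ∀ a (ha : a ∈ I), φ ⟨a, ha⟩ = a • y := by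
  classical
  let w : I →ₗ[R] F × R := φ.prod (-(I.subtype))
  let W : Submodule R (F × R) := LinearMap.range w
  let ι : F →ₗ[R] (F × R) ⧸ W := W.mkQ ∘ₗ LinearMap.inl R F R
  have hπ0 : W ≤ LinearMap.ker (I.mkQ ∘ₗ LinearMap.snd R F R) := by
    rintro _ ⟨a, rfl⟩
    show I.mkQ (-(a : R)) = 0
    rw [Submodule.mkQ_apply, Submodule.Quotient.mk_eq_zero]
    exact neg_mem a.2
  let π : ((F × R) ⧸ W) →ₗ[R] R ⧸ I := W.liftQ (I.mkQ ∘ₗ LinearMap.snd R F R) hπ0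
  have hι : Function.Injective ι := by
    intro x y hxy
    have h1 : ((x : F), (0 : R)) - ((y : F), (0 : R)) ∈ W := by
      rw [← Submodule.Quotient.eq]
      exact hxy
    obtain ⟨a, ha⟩ := h1
    have ha2 := congrArg Prod.snd ha
    have ha1 := congrArg Prod.fst ha
    simp only [w, LinearMap.prod_apply, Pi.prod, Function.prod, LinearMap.neg_apply,
      Submodule.coe_subtype, Prod.snd_sub, Prod.fst_sub, sub_zero, neg_eq_zero] at ha2 ha1
    have ha0 : a = 0 := Subtype.ext (by simpa using ha2)
    rw [ha0, map_zero] at ha1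
    exact sub_eq_zero.mp ha1.symm
  have hπ : Function.Surjective π := by
    intro q
    obtain ⟨r, rfl⟩ := Submodule.mkQ_surjective I q
    exact ⟨W.mkQ (0, r), rfl⟩
  have hker : LinearMap.ker π = LinearMap.range ι := by
    apply le_antisymm
    · intro q hq
      obtain ⟨⟨x, r⟩, rfl⟩ := Submodule.mkQ_surjective W q
      have hr : r ∈ I := by
        have h3 : I.mkQ r = 0 := hq
        rwa [Submodule.mkQ_apply, Submodule.Quotient.mk_eq_zero] at h3
      refine ⟨x + φ ⟨r, hr⟩, ?_⟩
      show W.mkQ (x + φ ⟨r, hr⟩, 0) = W.mkQ (x, r)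
      rw [Submodule.mkQ_apply, Submodule.mkQ_apply, Submodule.Quotient.eq]
      exact ⟨⟨r, hr⟩, by simp [w, Prod.ext_iff]⟩
    · rintro _ ⟨x, rfl⟩
      show π (W.mkQ (x, 0)) = 0
      show I.mkQ ((x, (0:R)).2) = 0
      simp
  obtain ⟨s, hs⟩ := splitting_of_ext1Vanishes hext ι π hι hπ hker
  let eqv : F ≃ₗ[R] LinearMap.range ι := LinearEquiv.ofInjective ι hι
  have hmem : ∀ q : (F × R) ⧸ W, q - s (π q) ∈ LinearMap.range ι := by
    intro q
    rw [← hker, LinearMap.mem_ker, map_sub]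
    have h4 : π (s (π q)) = π q := LinearMap.congr_fun hs (π q)
    rw [h4, sub_self]
  let rmap : ((F × R) ⧸ W) →ₗ[R] F := eqv.symm.toLinearMap ∘ₗ
    LinearMap.codRestrict (LinearMap.range ι) (LinearMap.id - s ∘ₗ π) hmem
  have hπι : ∀ z : F, π (ι z) = 0 := by
    intro z
    have hm : ι z ∈ LinearMap.ker π := by rw [hker]; exact ⟨z, rfl⟩
    exact hm
  have hrι : ∀ z : F, rmap (ι z) = z := by
    intro z
    have h1 : (⟨ι z - s (π (ι z)), hmem (ι z)⟩ : LinearMap.range ι) = eqv z := by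
      apply Subtype.ext
      show ι z - s (π (ι z)) = ((eqv z : LinearMap.range ι) : (F × R) ⧸ W)
      rw [hπι, map_zero, sub_zero]
      exact (LinearEquiv.ofInjective_apply (h := hι) ι z).symm
    calc rmap (ι z) = eqv.symm ⟨ι z - s (π (ι z)), hmem (ι z)⟩ := rfl
    _ = eqv.symm (eqv z) := by rw [h1]
    _ = z := eqv.symm_apply_apply z
  refine ⟨rmap (W.mkQ (0, 1)), ?_⟩
  intro a ha
  have key : ι (φ ⟨a, ha⟩) = a • W.mkQ ((0 : F), (1 : R)) := by
    show W.mkQ (φ ⟨a, ha⟩, 0) = a • W.mkQ ((0 : F), (1 : R))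
    rw [← map_smul, Submodule.mkQ_apply, Submodule.mkQ_apply, Submodule.Quotient.eq]
    refine ⟨⟨a, ha⟩, ?_⟩
    show (φ ⟨a, ha⟩, -(a : R)) = (φ ⟨a, ha⟩, (0 : R)) - a • ((0 : F), (1 : R))
    simp [Prod.ext_iff]
  calc φ ⟨a, ha⟩ = rmap (ι (φ ⟨a, ha⟩)) := (hrι _).symm
  _ = rmap (a • W.mkQ ((0 : F), (1 : R))) := by rw [key]
  _ = a • rmap (W.mkQ ((0 : F), (1 : R))) := map_smul rmap a _

end Aux

/-- If `M` is a `𝒬`-torsion-free submodule of a Lucas module `L`, essential in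
`L`, with `L/M` `𝒬`-torsion, then the inclusion `M → L` is an `ℒ`-envelope of `M`, where
`ℒ` is the class of Lucas modules. -/
theorem inclusion_is_lucas_envelope (R : Type u) [CommRing R]
    (L : Type u) [AddCommGroup L] [Module R L] (hL : IsLucasModule R L)
    (M : Submodule R L) (hM : IsQTorsionFree R M)
    (hess : ∀ N : Submodule R L, M ⊓ N = ⊥ → N = ⊥)
    (htor : IsQTorsion R (L ⧸ M)) :
    (∀ F' : ModuleCat.{u} R, IsLucasModule R F' →
      Function.Surjective (fun h : L →ₗ[R] F' => h.comp M.subtype)) ∧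
    (∀ h : L →ₗ[R] L, h.comp M.subtype = M.subtype → Function.Bijective h) := by
  classical
  have hsmulmem : ∀ (x : L) (I : Ideal R), (∀ a ∈ I, a • (Submodule.Quotient.mk x : L ⧸ M) = 0) →
      ∀ a ∈ I, a • x ∈ M := by
    intro x I hann a ha
    have := hann a ha
    rwa [← Submodule.Quotient.mk_smul, Submodule.Quotient.mk_eq_zero] at this
  constructor
  · intro F' hF' f₀
    have f₀congr : ∀ (u v : L) (hu : u ∈ M) (hv : v ∈ M), u = v →
        f₀ ⟨u, hu⟩ = f₀ ⟨v, hv⟩ := by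
      intro u v hu hv h
      cases h
      rfl
    set Pred : L → F' → Prop := fun x y => ∃ I : Ideal R, I.IsInQ ∧
      ∀ a (ha : a ∈ I), ∃ hm : a • x ∈ M, a • y = f₀ ⟨a • x, hm⟩ with hPred
    have hex : ∀ x : L, ∃ y, Pred x y := by
      intro x
      obtain ⟨I, hI, hann⟩ := htor (Submodule.Quotient.mk x)
      have hmem : ∀ a ∈ I, a • x ∈ M := hsmulmem x I hann
      let ψ : I →ₗ[R] M := LinearMap.codRestrict M
        ((LinearMap.toSpanSingleton R L x) ∘ₗ I.subtype) (fun c => hmem c c.2)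
      obtain ⟨y, hy⟩ := extend_ideal_map hI (hF'.2 I hI) (f₀ ∘ₗ ψ)
      exact ⟨y, I, hI, fun a ha => ⟨hmem a ha, (hy a ha).symm⟩⟩
    have huniq : ∀ x y y', Pred x y → Pred x y' → y = y' := by
      rintro x y y' ⟨I, hI, hIy⟩ ⟨J, hJ, hJy⟩
      refine hF'.1.eq (hI.mul hJ) ?_
      intro c hc
      refine Submodule.mul_induction_on hc ?_ ?_
      · intro a haI b hbJ
        obtain ⟨hma, hea⟩ := hIy a haI
        obtain ⟨hmb, heb⟩ := hJy b hbJ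
        have hmab : (a * b) • x ∈ M := by
          rw [mul_comm, mul_smul]
          exact M.smul_mem b hma
        calc (a * b) • y = b • (a • y) := by rw [mul_comm, mul_smul]
        _ = b • f₀ ⟨a • x, hma⟩ := by rw [hea]
        _ = f₀ (b • (⟨a • x, hma⟩ : M)) := (map_smul f₀ b _).symm
        _ = f₀ ⟨(a * b) • x, hmab⟩ := f₀congr _ _ _ _ (by rw [mul_comm, mul_smul])
        _ = f₀ (a • (⟨b • x, hmb⟩ : M)) := (f₀congr _ _ _ _ (by rw [mul_smul])).symm
        _ = a • f₀ ⟨b • x, hmb⟩ := map_smul f₀ a _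
        _ = a • (b • y') := by rw [heb]
        _ = (a * b) • y' := (mul_smul a b y').symm
      · intro c₁ c₂ h1 h2
        rw [add_smul, add_smul, h1, h2]
    choose gfun hg using hex
    have hPadd : ∀ x x', Pred (x + x') (gfun x + gfun x') := by
      intro x x'
      obtain ⟨I, hI, hIy⟩ := hg x
      obtain ⟨J, hJ, hJy⟩ := hg x'
      refine ⟨I * J, hI.mul hJ, ?_⟩
      intro c hc
      refine Submodule.mul_induction_on hc ?_ ?_
      · intro a haI b hbJ
        obtain ⟨hma, hea⟩ := hIy a haI
        obtain ⟨hmb, heb⟩ := hJy b hbJ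
        have hm1 : (a * b) • x ∈ M := by
          rw [mul_comm, mul_smul]; exact M.smul_mem b hma
        have hm2 : (a * b) • x' ∈ M := by
          rw [mul_smul]; exact M.smul_mem a hmb
        refine ⟨by rw [smul_add]; exact M.add_mem hm1 hm2, ?_⟩
        calc (a * b) • (gfun x + gfun x')
            = (a * b) • gfun x + (a * b) • gfun x' := smul_add _ _ _
        _ = b • (a • gfun x) + a • (b • gfun x') := by
            rw [mul_smul, mul_smul, smul_comm a b (gfun x)]
        _ = b • f₀ ⟨a • x, hma⟩ + a • f₀ ⟨b • x', hmb⟩ := by rw [hea, heb]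
        _ = f₀ (b • (⟨a • x, hma⟩ : M) + a • (⟨b • x', hmb⟩ : M)) := by
            rw [map_add, map_smul, map_smul]
        _ = f₀ ⟨(a * b) • (x + x'), _⟩ := f₀congr _ _
            (M.add_mem (M.smul_mem b hma) (M.smul_mem a hmb)) _ (by
              show b • (a • x) + a • (b • x') = (a * b) • (x + x')
              rw [smul_add, ← mul_smul, ← mul_smul, mul_comm b a])
      · rintro c₁ c₂ ⟨hm1, he1⟩ ⟨hm2, he2⟩
        refine ⟨by rw [add_smul]; exact M.add_mem hm1 hm2, ?_⟩
        calc (c₁ + c₂) • (gfun x + gfun x')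
            = c₁ • (gfun x + gfun x') + c₂ • (gfun x + gfun x') := add_smul _ _ _
        _ = f₀ ⟨c₁ • (x + x'), hm1⟩ + f₀ ⟨c₂ • (x + x'), hm2⟩ := by rw [he1, he2]
        _ = f₀ (⟨c₁ • (x + x'), hm1⟩ + ⟨c₂ • (x + x'), hm2⟩) := (map_add f₀ _ _).symm
        _ = f₀ ⟨(c₁ + c₂) • (x + x'), _⟩ := f₀congr _ _ (M.add_mem hm1 hm2) _ (by
              show c₁ • (x + x') + c₂ • (x + x') = (c₁ + c₂) • (x + x')
              rw [add_smul])
    have hPsmul : ∀ (c : R) (x : L), Pred (c • x) (c • gfun x) := by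
      intro c x
      obtain ⟨I, hI, hIy⟩ := hg x
      refine ⟨I, hI, ?_⟩
      intro a ha
      obtain ⟨hma, hea⟩ := hIy a ha
      have hm : a • (c • x) ∈ M := by
        rw [smul_comm]
        exact M.smul_mem c hma
      refine ⟨hm, ?_⟩
      calc a • (c • gfun x) = c • (a • gfun x) := smul_comm a c _
      _ = c • f₀ ⟨a • x, hma⟩ := by rw [hea]
      _ = f₀ (c • (⟨a • x, hma⟩ : M)) := (map_smul f₀ c _).symm
      _ = f₀ ⟨a • (c • x), hm⟩ := f₀congr _ _ _ _ (smul_comm c a x)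
    let hmap : L →ₗ[R] F' :=
      { toFun := gfun
        map_add' := fun x x' => huniq (x + x') _ _ (hg (x + x')) (hPadd x x')
        map_smul' := fun c x => huniq (c • x) _ _ (hg (c • x)) (hPsmul c x) }
    refine ⟨hmap, ?_⟩
    apply LinearMap.ext
    intro m
    show gfun (m : L) = f₀ m
    refine huniq (m : L) _ _ (hg (m : L)) ⟨⊤, Ideal.top_isInQ, ?_⟩
    intro a _
    refine ⟨M.smul_mem a m.2, ?_⟩
    calc a • f₀ m = f₀ (a • m) := (map_smul f₀ a m).symm
    _ = f₀ ⟨a • (m : L), M.smul_mem a m.2⟩ := rfl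
  · intro h hcomp
    have hfix : ∀ x ∈ M, h x = x := fun x hx => LinearMap.congr_fun hcomp ⟨x, hx⟩
    have hinj : Function.Injective h := by
      rw [← LinearMap.ker_eq_bot]
      apply hess
      rw [eq_bot_iff]
      rintro x ⟨hxM, hxk⟩
      have h1 : h x = 0 := hxk
      have h2 : h x = x := hfix x hxM
      rw [Submodule.mem_bot]
      rw [← h2, h1]
    refine ⟨hinj, ?_⟩
    intro x
    obtain ⟨I, hI, hann⟩ := htor (Submodule.Quotient.mk x)
    have hmem : ∀ a ∈ I, a • x ∈ M := hsmulmem x I hann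
    set e : L ≃ₗ[R] LinearMap.range h := LinearEquiv.ofInjective h hinj with he
    have hrange : ∀ a ∈ I, a • x ∈ LinearMap.range h :=
      fun a ha => ⟨a • x, hfix _ (hmem a ha)⟩
    let ψ : I →ₗ[R] LinearMap.range h := LinearMap.codRestrict _
      ((LinearMap.toSpanSingleton R L x) ∘ₗ I.subtype) (fun c => hrange c c.2)
    obtain ⟨y, hy⟩ := extend_ideal_map hI (hL.2 I hI) (e.symm.toLinearMap ∘ₗ ψ)
    refine ⟨y, ?_⟩
    refine hL.1.eq hI ?_
    intro a ha
    have h1 : e.symm (ψ ⟨a, ha⟩) = a • y := hy a ha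
    have h2 : h (e.symm (ψ ⟨a, ha⟩)) = a • x := by
      calc h (e.symm (ψ ⟨a, ha⟩))
          = ((e (e.symm (ψ ⟨a, ha⟩)) : LinearMap.range h) : L) :=
            (LinearEquiv.ofInjective_apply (h := hinj) h _).symm
      _ = ((ψ ⟨a, ha⟩ : LinearMap.range h) : L) := by rw [e.apply_symm_apply]
      _ = a • x := rfl
    calc a • h y = h (a • y) := (map_smul h a y).symm
    _ = h (e.symm (ψ ⟨a, ha⟩)) := by rw [h1]
    _ = a • x := h2
end

section
/- Let R be a commutative ring and {M_i, φ_{i,j} | i, j ∈ Γ} a direct system of Lucas R-modules over a directed index set Γ. Then the direct limit lim→ M_i is a Lucas module. -/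
open CategoryTheory Limits Projective

universe u

noncomputable section
universe v

section Res
variable {C : Type u} [Category.{v} C] [Abelian C] [EnoughProjectives C]
variable {Z P : C} (π : P ⟶ Z) [Projective P] [Epi π]

set_option linter.unusedSectionVars false

/-- generalized `ProjectiveResolution.ofComplex` with chosen bottom epi. -/
def MyRes.ofComplex : ChainComplex C ℕ :=
  ChainComplex.mk' P (syzygies π) (d π)
    (fun f => ⟨syzygies f, d f, by
      show (Projective.π (kernel f) ≫ kernel.ι f) ≫ f = 0; simp⟩)

lemma MyRes.ofComplex_d_1_0 : (MyRes.ofComplex π).d 1 0 = d π := by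
  simp [ofComplex]

lemma MyRes.ofComplex_d_2_1 : (MyRes.ofComplex π).d 2 1 = d (d π) :=
  ChainComplex.mk_d_2_1 _ _ _ _ _ _ _

lemma MyRes.ofComplex_exactAt_succ (n : ℕ) :
    (MyRes.ofComplex π).ExactAt (n + 1) := by
  rw [HomologicalComplex.exactAt_iff' _ (n + 1 + 1) (n + 1) n (by simp) (by simp)]
  have hd := ChainComplex.mk'_d (V := C) P (syzygies π) (d π) (fun f => ⟨syzygies f, d f, by
      show (Projective.π (kernel f) ≫ kernel.ι f) ≫ f = 0; simp⟩) n
  have hex := exact_d_f ((MyRes.ofComplex π).d (n + 1) n)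
  refine ShortComplex.exact_of_iso ?_ hex
  refine (ShortComplex.isoMk
    (ChainComplex.mk'XIso (V := C) P (syzygies π) (d π) (fun f => ⟨syzygies f, d f, by
      show (Projective.π (kernel f) ≫ kernel.ι f) ≫ f = 0; simp⟩) n).symm
    (Iso.refl _) (Iso.refl _) ?_ ?_)
  · exact ((Iso.inv_comp_eq _).2 hd).trans (Category.comp_id _).symm
  · exact (Category.id_comp _).trans (Category.comp_id _).symm

instance (n : ℕ) : Projective ((MyRes.ofComplex π).X n) := by
  obtain (_ | _ | _ | n) := n
  · exact ‹Projective P›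
  all_goals apply Projective.projective_over

def MyRes.res : ProjectiveResolution Z where
  complex := MyRes.ofComplex π
  π := (ChainComplex.toSingle₀Equiv _ _).symm ⟨π, by
          simp [MyRes.ofComplex]
          show (Projective.π (kernel π) ≫ kernel.ι π) ≫ π = 0; simp⟩
  quasiIso := ⟨fun n => by
    cases n
    · rw [ChainComplex.quasiIsoAt₀_iff, ShortComplex.quasiIso_iff_of_zeros']
      · refine (ShortComplex.exact_and_epi_g_iff_of_iso ?_).2
          ⟨exact_d_f π, by dsimp; infer_instance⟩
        exact ShortComplex.isoMk (Iso.refl _) (Iso.refl _) (Iso.refl _)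
          (by simp [MyRes.ofComplex]; exact (Category.id_comp _).trans (Category.comp_id _).symm)
          (by simp; exact (Category.id_comp _).trans ((Category.comp_id _).trans
            (ChainComplex.toSingle₀Equiv_symm_apply_f_zero (C := MyRes.ofComplex π) π _)).symm)
      all_goals rfl
    · rw [quasiIsoAt_iff_exactAt']
      · apply MyRes.ofComplex_exactAt_succ
      · apply ChainComplex.exactAt_succ_single_obj⟩

end Res

variable {R : Type u} [CommRing R]

/-- Factorization through a surjection. -/
lemma exists_factor {A B M : Type u} [AddCommGroup A] [AddCommGroup B] [AddCommGroup M]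
    [Module R A] [Module R B] [Module R M] (p : A →ₗ[R] B) (hp : Function.Surjective p)
    (q : A →ₗ[R] M) (hker : LinearMap.ker p ≤ LinearMap.ker q) :
    ∃ χ : B →ₗ[R] M, ∀ a, χ (p a) = q a := by
  let e := p.quotKerEquivOfSurjective hp
  refine ⟨((LinearMap.ker p).liftQ q hker).comp e.symm.toLinearMap, fun a => ?_⟩
  have h1 : e.symm (p a) = Submodule.Quotient.mk a := by
    apply e.injective
    simp only [LinearEquiv.apply_symm_apply]
    rfl
  simp only [LinearMap.comp_apply, LinearEquiv.coe_toLinearMap, h1]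
  exact Submodule.liftQ_apply _ _ _

section ExtChar
variable (I : Ideal R) (M : Type u) [AddCommGroup M] [Module R M]

instance : Projective (ModuleCat.of R R) :=
  ModuleCat.projective_of_free (Module.Basis.singleton PUnit.{u+1} R)

def πI : ModuleCat.of R R ⟶ ModuleCat.of R (R ⧸ I) :=
  ModuleCat.ofHom (Submodule.mkQ I)

instance : Epi (πI I) := (ModuleCat.epi_iff_surjective _).mpr (Submodule.mkQ_surjective I)

/-- The extension (Baer-type) property for a single ideal. -/
def ExtProp : Prop := ∀ f : I →ₗ[R] M, ∃ m : M, ∀ a : I, f a = (a : R) • m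

theorem ext1Vanishes_iff_extProp : Ext1Vanishes R (R ⧸ I) M ↔ ExtProp I M := by
  classical
  let P : ProjectiveResolution (ModuleCat.of R (R ⧸ I)) := MyRes.res (πI I)
  let M' := ModuleCat.of R M
  let K := P.complex.linearYonedaObj R M'
  have step1 : Ext1Vanishes R (R ⧸ I) M ↔ K.ExactAt 1 := by
    rw [HomologicalComplex.exactAt_iff_isZero_homology]
    constructor
    · intro h
      have : Subsingleton (((Ext R (ModuleCat.{u} R) 1).obj
          (Opposite.op (ModuleCat.of R (R ⧸ I)))).obj M') := h
      exact IsZero.of_iso (ModuleCat.isZero_of_subsingleton _) (P.isoExt 1 M').symm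
    · intro h
      exact ModuleCat.subsingleton_of_isZero (IsZero.of_iso h (P.isoExt 1 M'))
  rw [step1, HomologicalComplex.exactAt_iff' K 0 1 2 (by simp) (by simp),
    ShortComplex.moduleCat_exact_iff]
  set S := K.sc' 0 1 2 with hS
  have hX2 : ↑S.X₂ = ((P.complex.X 1) ⟶ M') := rfl
  have hg' : ∀ (g : (P.complex.X 1) ⟶ M') (x : P.complex.X 2),
      (show (P.complex.X 2) ⟶ M' from S.g g) x = g (P.complex.d 2 1 x) := fun g x => rfl
  have hf' : ∀ (h : (P.complex.X 0) ⟶ M') (x : P.complex.X 1),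
      (show (P.complex.X 1) ⟶ M' from S.f h) x = h (P.complex.d 1 0 x) := fun h x => rfl
  have hc10 : P.complex.d 1 0 = d (πI I) := MyRes.ofComplex_d_1_0 (πI I)
  have h_range : LinearMap.range (P.complex.d 1 0).hom = I := by
    rw [hc10]
    exact ((ShortComplex.moduleCat_exact_iff_range_eq_ker _).1
      (CategoryTheory.exact_d_f (πI I))).trans (Submodule.ker_mkQ I)
  have h_ker : LinearMap.range (P.complex.d 2 1).hom = LinearMap.ker (P.complex.d 1 0).hom := by
    have he := MyRes.ofComplex_exactAt_succ (πI I) 0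
    rw [HomologicalComplex.exactAt_iff' _ 2 1 0 (by simp) (by simp),
      ShortComplex.moduleCat_exact_iff_range_eq_ker] at he
    exact he
  have hdd : ∀ x, P.complex.d 1 0 (P.complex.d 2 1 x) = 0 := by
    intro x
    exact (ConcreteCategory.congr_hom (P.complex.d_comp_d 2 1 0) x).trans rfl
  have mem_I : ∀ x, P.complex.d 1 0 x ∈ I := fun x => by
    have := LinearMap.mem_range_self (P.complex.d 1 0).hom x
    rwa [h_range] at this
  set d' : (P.complex.X 1) →ₗ[R] I := LinearMap.codRestrict I (P.complex.d 1 0).hom mem_I with hd'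
  have hd'surj : Function.Surjective d' := by
    intro b
    have hb : (b : R) ∈ LinearMap.range (P.complex.d 1 0).hom := by rw [h_range]; exact b.2
    obtain ⟨p, hp⟩ := hb
    exact ⟨p, Subtype.ext hp⟩
  constructor
  · intro hex f
    set g : (P.complex.X 1) →ₗ[R] M := f.comp d' with hg
    have hgc : S.g (ModuleCat.ofHom g : ↑S.X₂) = 0 := by
      have h0 : (show (P.complex.X 2) ⟶ M' from S.g (ModuleCat.ofHom g : ↑S.X₂)) = 0 := by
        apply ModuleCat.hom_ext
        apply LinearMap.ext
        intro x
        rw [hg' (ModuleCat.ofHom g : ↑S.X₂) x]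
        show f (d' (P.complex.d 2 1 x)) = 0
        have hz : d' (P.complex.d 2 1 x) = 0 := Subtype.ext (hdd x)
        rw [hz]
        exact map_zero f
      exact h0
    obtain ⟨h, hh⟩ := hex (ModuleCat.ofHom g : ↑S.X₂) hgc
    set hR : R →ₗ[R] M := (show (P.complex.X 0) ⟶ M' from h).hom with hhR
    refine ⟨hR 1, fun a => ?_⟩
    have ha : (a : R) ∈ LinearMap.range (P.complex.d 1 0).hom := by rw [h_range]; exact a.2
    obtain ⟨p, hp⟩ := ha
    have h1 : f a = g p := by
      have hdp : d' p = a := Subtype.ext hp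
      show f a = f (d' p)
      rw [hdp]
    have h2 : (show (P.complex.X 1) ⟶ M' from S.f h) = ModuleCat.ofHom g := hh
    have h4 : (show (P.complex.X 1) ⟶ M' from S.f h) p = hR ((P.complex.d 1 0) p) :=
      hf' (show (P.complex.X 0) ⟶ M' from h) p
    calc f a = g p := h1
      _ = hR ((P.complex.d 1 0) p) := (ConcreteCategory.congr_hom h2 p).symm.trans h4
      _ = hR ((a : R) • (1 : R)) := by rw [smul_eq_mul, mul_one, hp]
      _ = (a : R) • hR 1 := map_smul hR _ _
  · intro hextp g hgc
    set gL : (P.complex.X 1) →ₗ[R] M := (show (P.complex.X 1) ⟶ M' from g).hom with hgL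
    have hker2 : LinearMap.ker d' ≤ LinearMap.ker gL := by
      intro x hx
      have hx1 : x ∈ LinearMap.ker (P.complex.d 1 0).hom := congrArg Subtype.val
        (show d' x = 0 from hx)
      rw [← h_ker] at hx1
      obtain ⟨y, hy⟩ := hx1
      show gL x = 0
      rw [← hy]
      have h5 : gL ((P.complex.d 2 1) y) =
          (show (P.complex.X 2) ⟶ M' from S.g g) y := (hg' g y).symm
      rw [h5]
      rw [show S.g g = 0 from hgc]
      rfl
    obtain ⟨χ, hχ⟩ := exists_factor d' hd'surj gL hker2
    obtain ⟨m, hm⟩ := hextp χ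
    refine ⟨(show (P.complex.X 0) ⟶ M' from ModuleCat.ofHom (LinearMap.toSpanSingleton R M m)), ?_⟩
    have h6 : (show (P.complex.X 1) ⟶ M' from
        S.f (show (P.complex.X 0) ⟶ M' from ModuleCat.ofHom (LinearMap.toSpanSingleton R M m))) = g := by
      apply ModuleCat.hom_ext
      apply LinearMap.ext
      intro p
      have h7 : (show (P.complex.X 0) ⟶ M' from ModuleCat.ofHom (LinearMap.toSpanSingleton R M m))
          ((P.complex.d 1 0) p) = χ (d' p) := (hm (d' p)).symm
      exact (hf' (show (P.complex.X 0) ⟶ M' from ModuleCat.ofHom (LinearMap.toSpanSingleton R M m)) p).trans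
        (h7.trans (hχ p))
    exact h6

end ExtChar

section Limit

lemma span_smul_zero {M : Type u} [AddCommGroup M] [Module R M] {s : Set R} {y : M}
    (h : ∀ a ∈ s, a • y = 0) : ∀ a ∈ Ideal.span s, a • y = 0 := by
  intro a ha
  refine Submodule.span_induction (p := fun x _ => x • y = 0) h ?_ ?_ ?_ ha
  · exact zero_smul R y
  · intro x z _ _ hx hz
    rw [add_smul, hx, hz, add_zero]
  · intro r x _ hx
    rw [smul_eq_mul, mul_smul, hx, smul_zero]

variable {Γ : Type u} [Preorder Γ] [IsDirected Γ (· ≤ ·)] [DecidableEq Γ]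
    {M : Γ → Type u} [∀ i, AddCommGroup (M i)] [∀ i, Module R (M i)]
    (φ : ∀ i j : Γ, i ≤ j → (M i →ₗ[R] M j))
    [DirectedSystem M (fun i j h => φ i j h)]

lemma exists_common_kill [Nonempty Γ] {i : Γ} {α : Type u} (s : Finset α)
    (w : α → M i) :
    (∀ a ∈ s, Module.DirectLimit.of R Γ M φ i (w a) = 0) →
    ∃ j, ∃ h : i ≤ j, ∀ a ∈ s, φ i j h (w a) = 0 := by
  classical
  induction s using Finset.induction_on with
  | empty => exact fun _ => ⟨i, le_refl i, fun a ha => absurd ha (Finset.notMem_empty a)⟩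
  | @insert a s ha ih =>
    intro hw
    obtain ⟨j₁, hij₁, h₁⟩ := ih (fun b hb => hw b (Finset.mem_insert_of_mem hb))
    obtain ⟨j₂, hij₂, h₂⟩ := Module.DirectLimit.of.zero_exact (hw a (Finset.mem_insert_self a s))
    obtain ⟨k, hk₁, hk₂⟩ := exists_ge_ge j₁ j₂
    refine ⟨k, hij₁.trans hk₁, fun b hb => ?_⟩
    rcases Finset.mem_insert.1 hb with rfl | hb
    · calc φ i k (hij₂.trans hk₂) (w b)
          = φ j₂ k hk₂ (φ i j₂ hij₂ (w b)) := (Module.DirectedSystem.map_map φ _ _ _).symm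
        _ = 0 := by rw [h₂, map_zero]
    · calc φ i k (hij₁.trans hk₁) (w b)
          = φ j₁ k hk₁ (φ i j₁ hij₁ (w b)) := (Module.DirectedSystem.map_map φ _ _ _).symm
        _ = 0 := by rw [h₁ b hb, map_zero]

end Limit

/-- The direct limit of a direct system of Lucas modules over a directed
index set is a Lucas module. -/
theorem directLimit_lucas (R : Type u) [CommRing R]
    (Γ : Type u) [Preorder Γ] [IsDirected Γ (· ≤ ·)] [DecidableEq Γ]
    (M : Γ → Type u) [∀ i, AddCommGroup (M i)] [∀ i, Module R (M i)]
    (φ : ∀ i j : Γ, i ≤ j → (M i →ₗ[R] M j))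
    [DirectedSystem M (fun i j h => φ i j h)]
    (hM : ∀ i, IsLucasModule R (M i)) :
    IsLucasModule R (Module.DirectLimit M φ) := by
  classical
  rcases isEmpty_or_nonempty Γ with hΓ | hΓ
  · constructor
    · intro x _
      exact Subsingleton.elim x 0
    · intro I hIQ
      rw [ext1Vanishes_iff_extProp]
      intro f
      refine ⟨0, fun a => ?_⟩
      exact Subsingleton.elim _ _
  constructor
  · -- Q-torsion-free
    rintro x ⟨I, hIQ, hann⟩
    obtain ⟨s, hs⟩ := hIQ.1
    obtain ⟨i, y, rfl⟩ := Module.DirectLimit.exists_of x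
    have hsub : ∀ a ∈ s, a ∈ I := fun a ha => by
      rw [← hs]; exact Ideal.subset_span ha
    have hw : ∀ a ∈ s, Module.DirectLimit.of R Γ M φ i (a • y) = 0 := fun a ha => by
      rw [map_smul]; exact hann a (hsub a ha)
    obtain ⟨j, hij, hj⟩ := exists_common_kill φ s (fun a => a • y) hw
    have hz : ∀ a ∈ I, a • (φ i j hij y) = 0 := by
      intro a haI
      have haI' : a ∈ Ideal.span (↑s : Set R) := by rw [hs]; exact haI
      refine span_smul_zero (fun b hb => ?_) a haI'
      rw [← map_smul]
      exact hj b hb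
    have h0 : φ i j hij y = 0 := (hM j).1 _ ⟨I, hIQ, hz⟩
    calc Module.DirectLimit.of R Γ M φ i y
        = Module.DirectLimit.of R Γ M φ j (φ i j hij y) := Module.DirectLimit.of_f.symm
      _ = 0 := by rw [h0, map_zero]
  · -- Ext vanishing
    intro I hIQ
    rw [ext1Vanishes_iff_extProp]
    intro f
    obtain ⟨s, hs⟩ := hIQ.1
    have hsub : ∀ a ∈ s, a ∈ I := fun a ha => by
      rw [← hs]; exact Ideal.subset_span ha
    -- Step A : common preimages of f on the generators
    have hA : ∀ t : Finset R, ∃ i, ∃ g : R → M i, ∀ a ∈ t, ∀ (ha : a ∈ I),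
        Module.DirectLimit.of R Γ M φ i (g a) = f ⟨a, ha⟩ := by
      intro t
      induction t using Finset.induction_on with
      | empty =>
        exact ⟨Classical.arbitrary Γ, fun _ => 0,
          fun a ha => absurd ha (Finset.notMem_empty a)⟩
      | @insert a t ha ih =>
        obtain ⟨i₁, g₁, hg₁⟩ := ih
        by_cases haI : a ∈ I
        · obtain ⟨i₂, z, hz⟩ := Module.DirectLimit.exists_of (f ⟨a, haI⟩)
          obtain ⟨k, hk₁, hk₂⟩ := exists_ge_ge i₁ i₂
          refine ⟨k, fun b => if b = a then φ i₂ k hk₂ z else φ i₁ k hk₁ (g₁ b),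
            fun b hb hbI => ?_⟩
          by_cases hba : b = a
          · subst hba
            beta_reduce
            rw [if_pos rfl, Module.DirectLimit.of_f, hz]
          · rcases Finset.mem_insert.1 hb with h' | h'
            · exact absurd h' hba
            · simp only [if_neg hba]
              rw [Module.DirectLimit.of_f]
              exact hg₁ b h' hbI
        · refine ⟨i₁, g₁, fun b hb hbI => ?_⟩
          rcases Finset.mem_insert.1 hb with rfl | h'
          · exact absurd hbI haI
          · exact hg₁ b h' hbI
    obtain ⟨i, g, hg⟩ := hA s
    -- Step B : push to a common stage where the symmetry relations hold
    have hw2 : ∀ p ∈ s ×ˢ s,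
        Module.DirectLimit.of R Γ M φ i (p.1 • g p.2 - p.2 • g p.1) = 0 := by
      rintro ⟨a, b⟩ hp
      obtain ⟨has, hbs⟩ := Finset.mem_product.1 hp
      have haI := hsub a has
      have hbI := hsub b hbs
      rw [map_sub, map_smul, map_smul, hg b hbs hbI, hg a has haI]
      have h1 : a • (⟨b, hbI⟩ : I) = b • (⟨a, haI⟩ : I) := Subtype.ext (mul_comm a b)
      rw [← map_smul, ← map_smul, h1, sub_self]
    obtain ⟨j, hij, hj⟩ := exists_common_kill φ (s ×ˢ s)
      (fun p => p.1 • g p.2 - p.2 • g p.1) hw2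
    set g' : R → M j := fun a => φ i j hij (g a) with hg'def
    have hcomm : ∀ a ∈ s, ∀ b ∈ s, a • g' b = b • g' a := by
      intro a has b hbs
      have := hj (a, b) (Finset.mem_product.2 ⟨has, hbs⟩)
      rw [map_sub, map_smul, map_smul] at this
      exact sub_eq_zero.1 this
    have hgof : ∀ a ∈ s, ∀ (ha : a ∈ I),
        Module.DirectLimit.of R Γ M φ j (g' a) = f ⟨a, ha⟩ := by
      intro a has ha
      rw [hg'def]
      simp only
      rw [Module.DirectLimit.of_f]
      exact hg a has ha
    -- Step C : build the linear map χ : I →ₗ[R] M j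
    set σ : ((↥s : Type u) →₀ R) →ₗ[R] R :=
      Finsupp.linearCombination R (fun a : ↥s => (a : R)) with hσdef
    set τ : ((↥s : Type u) →₀ R) →ₗ[R] M j :=
      Finsupp.linearCombination R (fun a : ↥s => g' (a : R)) with hτdef
    have hσrange : LinearMap.range σ = I := by
      have hr : (Set.range fun a : ↥s => (a : R)) = (↑s : Set R) := by
        ext r
        simp
      rw [hσdef, Finsupp.range_linearCombination, hr, ← hs]
    have memσ : ∀ c, σ c ∈ I := fun c => by
      rw [← hσrange]; exact LinearMap.mem_range_self σ c
    set σI : ((↥s : Type u) →₀ R) →ₗ[R] I := LinearMap.codRestrict I σ memσ with hσI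
    have hσIsurj : Function.Surjective σI := by
      intro b
      have hb : (b : R) ∈ LinearMap.range σ := by rw [hσrange]; exact b.2
      obtain ⟨c, hc⟩ := hb
      exact ⟨c, Subtype.ext hc⟩
    have hkerστ : LinearMap.ker σI ≤ LinearMap.ker τ := by
      intro c hc
      have hc0 : σ c = 0 := congrArg Subtype.val (show σI c = 0 from hc)
      set y : M j := τ c with hy
      have hby : ∀ b ∈ s, b • y = 0 := by
        intro b hbs
        have e1 : b • y = c.sum fun a r => (r • (a : R)) • g' b := by
          rw [hy, hτdef, Finsupp.linearCombination_apply, Finsupp.smul_sum]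
          refine Finset.sum_congr rfl ?_
          intro a _
          beta_reduce
          rw [smul_comm b _ (g' (a : R)), ← hcomm (a : R) a.2 b hbs, smul_eq_mul,
            mul_smul]
        have e2 : (c.sum fun a r => (r • (a : R)) • g' b) = (σ c) • g' b := by
          rw [hσdef, Finsupp.linearCombination_apply, Finsupp.sum, Finsupp.sum,
            Finset.sum_smul]
        rw [e1, e2, hc0, zero_smul]
      have hIy : ∀ a ∈ I, a • y = 0 := by
        intro a haI
        have haI' : a ∈ Ideal.span (↑s : Set R) := by rw [hs]; exact haI
        exact span_smul_zero hby a haI'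
      show τ c = 0
      rw [← hy]
      exact (hM j).1 y ⟨I, hIQ, hIy⟩
    obtain ⟨χ, hχ⟩ := exists_factor σI hσIsurj τ hkerστ
    have hχgen : ∀ a ∈ s, ∀ (ha : a ∈ I), χ ⟨a, ha⟩ = g' a := by
      intro a has ha
      have h1 : σI (Finsupp.single (⟨a, has⟩ : ↥s) 1) = ⟨a, ha⟩ := by
        apply Subtype.ext
        show σ (Finsupp.single (⟨a, has⟩ : ↥s) 1) = a
        rw [hσdef, Finsupp.linearCombination_single, one_smul]
      have h2 : τ (Finsupp.single (⟨a, has⟩ : ↥s) 1) = g' a := by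
        rw [hτdef, Finsupp.linearCombination_single, one_smul]
      rw [← h1, hχ, h2]
    -- Step D : use the Lucas property of M j
    have hext := (hM j).2 I hIQ
    rw [ext1Vanishes_iff_extProp] at hext
    obtain ⟨m, hm⟩ := hext χ
    refine ⟨Module.DirectLimit.of R Γ M φ j m, fun a => ?_⟩
    -- prove equality for all a : I by span induction
    have key : ∀ x : R, x ∈ Ideal.span (↑s : Set R) → ∀ (hx : x ∈ I),
        f ⟨x, hx⟩ = x • Module.DirectLimit.of R Γ M φ j m := by
      intro x hxspan
      refine Submodule.span_induction
        (p := fun x _ => ∀ (hx : x ∈ I), f ⟨x, hx⟩ = x • Module.DirectLimit.of R Γ M φ j m)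
        ?_ ?_ ?_ ?_ hxspan
      · intro b hbs hbI
        rw [← hgof b hbs hbI, ← hχgen b hbs hbI, hm ⟨b, hbI⟩, map_smul]
      · intro _
        rw [show (⟨(0:R), I.zero_mem⟩ : I) = (0 : I) from Subtype.ext rfl, map_zero, zero_smul]
      · intro u v hu hv hpu hpv huv
        have hu' : u ∈ I := by rw [← hs]; exact hu
        have hv' : v ∈ I := by rw [← hs]; exact hv
        have : (⟨u + v, huv⟩ : I) = ⟨u, hu'⟩ + ⟨v, hv'⟩ := Subtype.ext rfl
        rw [this, map_add, hpu hu', hpv hv', add_smul]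
      · intro r x hx hpx hrx
        have hx' : x ∈ I := by rw [← hs]; exact hx
        have : (⟨r • x, hrx⟩ : I) = r • (⟨x, hx'⟩ : I) := Subtype.ext rfl
        rw [this, map_smul, hpx hx', smul_eq_mul, mul_smul]
    have haspan : (a : R) ∈ Ideal.span (↑s : Set R) := by rw [hs]; exact a.2
    have := key (a : R) haspan a.2
    rw [show (⟨(a : R), a.2⟩ : I) = a from Subtype.ext rfl] at this
    exact this

end
end
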